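/- Under the PI policy, along every sample path and for every horizon T ≥ 1, the number of token messages sent during [1, T] — that is, the number of pairs (i, t) with 1 ≤ t ≤ T such that server i becomes idle at slot t, meaning Q_i(t−1) + a(t)·1{LI(t)=i} > 0 and Q_i(t) = 0 — is at most n plus the number of time slots t ∈ [1, T] with a(t) > 0 (so at most one message is sent per arriving batch, up to the n initial backlogs). -/

import Mathlib

/-- **Communication overhead of PI** (Proposition 1).  Along every sample path of the PI
model and for every horizon `T ≥ 1`, the number of token messages sent during the time slots
`1,…,T` — that is, the number of pairs `(t, i)` with `1 ≤ t ≤ T` such that server `i` becomes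
idle at slot `t`, meaning `Q i (t-1) + a t • 1{LI t = i} > 0` and `Q i t = 0` — is at most
`n` plus the number of time slots `t ∈ [1, T]` with `a t > 0`: at most one message is sent per
arriving batch, up to the `n` initial backlogs.

The sample path is deterministic here: `a t` is the batch size of slot `t`, `s i t` the service
capacity of server `i` in slot `t` (with `1 ≤ s i t ≤ smax`), `Q t i` the queue length of
server `i` at the end of slot `t`, and `LI t` the Last-Idle server of slot `t`; the PI dynamics
`Q (t+1) i = (Q t i + a (t+1) • 1{LI (t+1) = i}) - s i (t+1)` (truncated subtraction in `ℕ`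
realizing `[·]⁺`) hold, the Last-Idle server is idle at the previous slot whenever some server
is idle then, and is unchanged when no server is idle. -/
theorem pi_communication_overhead
    {n : ℕ} (hn : 2 ≤ n) (smax : ℕ)
    (a : ℕ → ℕ) (s : Fin n → ℕ → ℕ)
    (Q : ℕ → Fin n → ℕ) (LI : ℕ → Fin n)
    (hs : ∀ i t, 1 ≤ s i t ∧ s i t ≤ smax)
    (hdyn : ∀ t i, Q (t+1) i = Q t i + (if LI (t+1) = i then a (t+1) else 0) - s i (t+1))
    (hLI_idle : ∀ t, (∃ j, Q t j = 0) → Q t (LI (t+1)) = 0)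
    (hLI_stay : ∀ t, (¬ ∃ j, Q t j = 0) → LI (t+1) = LI t) :
    ∀ T : ℕ, 1 ≤ T →
      (((Finset.Icc 1 T) ×ˢ (Finset.univ : Finset (Fin n))).filter
          (fun p => 0 < Q (p.1 - 1) p.2 + (if LI p.1 = p.2 then a p.1 else 0) ∧
            Q p.1 p.2 = 0)).card
        ≤ n + ((Finset.Icc 1 T).filter (fun t => 0 < a t)).card := by
  intro T hT
  classical
  -- queues stay empty without arrivals
  have key : ∀ (i : Fin n) (t0 t : ℕ), t0 ≤ t → Q t0 i = 0 →
      (∀ u, t0 < u → u ≤ t → LI u = i → a u = 0) → Q t i = 0 := by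
    intro i t0 t
    induction t with
    | zero =>
      intro h h0 _
      have : t0 = 0 := Nat.le_zero.mp h
      subst this; exact h0
    | succ t ih =>
      intro h h0 hno
      rcases Nat.lt_or_ge t0 (t+1) with hlt | hge
      · have ht : Q t i = 0 := ih (by omega) h0 (fun u hu1 hu2 => hno u hu1 (by omega))
        have hd := hdyn t i
        by_cases hLI : LI (t+1) = i
        · have ha : a (t+1) = 0 := hno (t+1) (by omega) le_rfl hLI
          rw [hd, ht, if_pos hLI, ha]; simp
        · rw [hd, ht, if_neg hLI]; simp
      · have : t0 = t+1 := by omega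
        subst this; exact h0
  -- no new idle event without an intermediate arrival
  have contra : ∀ (i : Fin n) (t1 t2 : ℕ), t1 < t2 → Q t1 i = 0 →
      (∀ u, t1 < u → u ≤ t2 → LI u = i → a u = 0) →
      ¬ (0 < Q (t2-1) i + (if LI t2 = i then a t2 else 0)) := by
    intro i t1 t2 h12 h0 hno hcon
    have hq : Q (t2-1) i = 0 :=
      key i t1 (t2-1) (by omega) h0 (fun u h1 h2 h3 => hno u h1 (by omega) h3)
    rw [hq] at hcon
    by_cases hLI : LI t2 = i
    · have := hno t2 h12 le_rfl hLI
      rw [if_pos hLI, this] at hcon; exact absurd hcon (by simp)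
    · rw [if_neg hLI] at hcon; exact absurd hcon (by simp)
  set P : Fin n → ℕ → Prop := fun i u => LI u = i ∧ 0 < a u ∧ 1 ≤ u with hP
  have hPdec : ∀ i, DecidablePred (P i) := fun i u => by
    unfold P; infer_instance
  set f : ℕ × Fin n → ℕ ⊕ Fin n := fun p =>
    if Nat.findGreatest (P p.2) p.1 = 0 then Sum.inr p.2
    else Sum.inl (Nat.findGreatest (P p.2) p.1) with hf
  have hPg : ∀ (i : Fin n) (t : ℕ), Nat.findGreatest (P i) t ≠ 0 →
      P i (Nat.findGreatest (P i) t) := by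
    intro i t hne
    rw [Ne, Nat.findGreatest_eq_zero_iff] at hne
    push_neg at hne
    obtain ⟨m, hm1, hm2, hm3⟩ := hne
    exact Nat.findGreatest_spec hm2 hm3
  have hle : (((Finset.Icc 1 T) ×ˢ (Finset.univ : Finset (Fin n))).filter
          (fun p => 0 < Q (p.1 - 1) p.2 + (if LI p.1 = p.2 then a p.1 else 0) ∧
            Q p.1 p.2 = 0)).card
      ≤ (((Finset.Icc 1 T).filter (fun t => 0 < a t)).disjSum
          (Finset.univ : Finset (Fin n))).card := by
    apply Finset.card_le_card_of_injOn f
    · intro p hp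
      simp only [Finset.mem_coe, Finset.mem_filter, Finset.mem_product, Finset.mem_Icc,
        Finset.mem_univ, and_true] at hp
      obtain ⟨⟨hp1, hp2⟩, _, _⟩ := hp
      rw [hf]
      by_cases hg : Nat.findGreatest (P p.2) p.1 = 0
      · simp [hg]
      · have hPval := hPg p.2 p.1 hg
        obtain ⟨_, ha, h1⟩ := hPval
        have hgle : Nat.findGreatest (P p.2) p.1 ≤ p.1 := Nat.findGreatest_le p.1
        simp only [hg, if_neg, ite_false, Finset.mem_coe, Finset.inl_mem_disjSum, Finset.mem_filter,
          Finset.mem_Icc]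
        exact ⟨⟨h1, le_trans hgle hp2⟩, ha⟩
    · intro p hp q hq hfpq
      simp only [Finset.coe_filter, Set.mem_setOf_eq, Finset.mem_product, Finset.mem_Icc,
        Finset.mem_univ, and_true] at hp hq
      obtain ⟨⟨hp1, hp2⟩, hpev, hpz⟩ := hp
      obtain ⟨⟨hq1, hq2⟩, hqev, hqz⟩ := hq
      rw [hf] at hfpq
      simp only at hfpq
      by_cases h1 : Nat.findGreatest (P p.2) p.1 = 0 <;>
        by_cases h2 : Nat.findGreatest (P q.2) q.1 = 0
      · rw [if_pos h1, if_pos h2] at hfpq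
        have hi : p.2 = q.2 := by injection hfpq
        rw [← hi] at hqev hqz h2
        have hnoP : ∀ t', ∀ u, u ≤ t' → (t' = p.1 ∨ t' = q.1) → 1 ≤ u → ¬ P p.2 u := by
          intro t' u hu ht' h1u
          rcases ht' with h | h
          · subst h; exact Nat.findGreatest_eq_zero_iff.mp h1 h1u hu
          · subst h; exact Nat.findGreatest_eq_zero_iff.mp h2 h1u hu
        rcases lt_trichotomy p.1 q.1 with hlt | heq | hgt
        · exact absurd hqev (contra p.2 p.1 q.1 hlt hpz
            (fun u hu1 hu2 hLIu => by
              by_contra hau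
              exact hnoP q.1 u hu2 (Or.inr rfl) (by omega) ⟨hLIu, by omega, by omega⟩))
        · exact Prod.ext_iff.mpr ⟨heq, hi⟩
        · exact absurd hpev (contra p.2 q.1 p.1 hgt hqz
            (fun u hu1 hu2 hLIu => by
              by_contra hau
              exact hnoP p.1 u hu2 (Or.inl rfl) (by omega) ⟨hLIu, by omega, by omega⟩))
      · rw [if_pos h1, if_neg h2] at hfpq; exact absurd hfpq (by simp)
      · rw [if_neg h1, if_pos h2] at hfpq; exact absurd hfpq (by simp)
      · rw [if_neg h1, if_neg h2] at hfpq
        have hg : Nat.findGreatest (P p.2) p.1 = Nat.findGreatest (P q.2) q.1 := by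
          injection hfpq
        have hPp := hPg p.2 p.1 h1
        have hPq := hPg q.2 q.1 h2
        have hi : p.2 = q.2 := by
          rw [← hPp.1, hg, hPq.1]
        rw [← hi] at hqev hqz hg
        rcases lt_trichotomy p.1 q.1 with hlt | heq | hgt
        · have hgle : Nat.findGreatest (P p.2) q.1 ≤ p.1 := by
            rw [← hg]; exact Nat.findGreatest_le p.1
          exact absurd hqev (contra p.2 p.1 q.1 hlt hpz
            (fun u hu1 hu2 hLIu => by
              by_contra hau
              exact Nat.findGreatest_is_greatest (P := P p.2) (n := q.1) (by omega) hu2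
                (⟨hLIu, by omega, by omega⟩ : P p.2 u)))
        · exact Prod.ext_iff.mpr ⟨heq, hi⟩
        · have hgle : Nat.findGreatest (P p.2) p.1 ≤ q.1 := by
            rw [hg]; exact Nat.findGreatest_le q.1
          exact absurd hpev (contra p.2 q.1 p.1 hgt hqz
            (fun u hu1 hu2 hLIu => by
              by_contra hau
              exact Nat.findGreatest_is_greatest (P := P p.2) (n := p.1) (by omega) hu2
                (⟨hLIu, by omega, by omega⟩ : P p.2 u)))
  have hcard : (((Finset.Icc 1 T).filter (fun t => 0 < a t)).disjSum
      (Finset.univ : Finset (Fin n))).card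
      = ((Finset.Icc 1 T).filter (fun t => 0 < a t)).card + n := by
    simp [Finset.card_disjSum]
  omega
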